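/- Let μ be a probability measure on a measurable space X, ν a σ-finite measure on Y, and p : X → Y → ℝ≥0∞ with the uncurried map measurable and uniformly bounded (there is M : ℝ≥0 with p x y ≤ M for all x, y). Let ρ = ν.withDensity (fun y => ∫⁻ x, p x y ∂μ) (the marginal of the joint distribution on Y). Then for all measurable B ⊆ X and C ⊆ Y: ∫⁻_{y ∈ C} (∫⁻_{x ∈ B} p x y ∂μ) ∂ν = ∫⁻_{y ∈ C} ((∫⁻_{x ∈ B} p x y ∂μ) / (∫⁻_{x} p x y ∂μ)) ∂ρ. That is, the Bayes-rule kernel κ(y, B) = (∫_B p(y|x) dμ)/(∫ p(y|x) dμ) is a version of the conditional distribution of X given Y. -/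

import Mathlib

open MeasureTheory ENNReal

/-- Effective Bayes' rule: let `μ` be a probability measure on `X` (the prior), `ν` a
σ-finite measure on `Y`, and `p : X → Y → ℝ≥0∞` a jointly measurable, uniformly bounded
conditional density of the observation given the model.  Let
`ρ = ν.withDensity (fun y => ∫⁻ x, p x y ∂μ)` be the marginal on `Y`.  Then the
Bayes-rule kernel `κ (y, B) = (∫⁻_{x ∈ B} p x y ∂μ) / (∫⁻ x, p x y ∂μ)` is a version of
the conditional distribution of `X` given `Y`: integrating it over `C` against `ρ`
recovers the joint measure of `B ×ˢ C`. -/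
theorem bayes_kernel_is_conditional
    {X Y : Type*} [MeasurableSpace X] [MeasurableSpace Y]
    (μ : Measure X) [IsProbabilityMeasure μ]
    (ν : Measure Y) [SigmaFinite ν]
    (p : X → Y → ℝ≥0∞)
    (hp : Measurable fun q : X × Y => p q.1 q.2)
    (M : NNReal) (hbd : ∀ x y, p x y ≤ M) :
    ∀ B : Set X, MeasurableSet B → ∀ C : Set Y, MeasurableSet C →
      ∫⁻ y in C, (∫⁻ x in B, p x y ∂μ) ∂ν =
        ∫⁻ y in C, ((∫⁻ x in B, p x y ∂μ) / (∫⁻ x, p x y ∂μ))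
          ∂(ν.withDensity (fun y => ∫⁻ x, p x y ∂μ)) := by
  intro B hB C hC
  have hf : Measurable fun y => ∫⁻ x, p x y ∂μ := hp.lintegral_prod_left'
  have hg : Measurable fun y => ∫⁻ x in B, p x y ∂μ := by
    have hind : (fun q : X × Y => B.indicator (fun x => p x q.2) q.1)
        = (B ×ˢ Set.univ).indicator (fun q => p q.1 q.2) := by
      funext q
      by_cases h : q.1 ∈ B <;> simp [Set.indicator, h]
    have : Measurable fun q : X × Y => B.indicator (fun x => p x q.2) q.1 := by
      rw [hind]; exact hp.indicator (hB.prod MeasurableSet.univ)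
    simp_rw [← lintegral_indicator hB]
    exact Measurable.lintegral_prod_left' this
  rw [setLIntegral_withDensity_eq_setLIntegral_mul _ (g := fun y => (∫⁻ x in B, p x y ∂μ) / ∫⁻ x, p x y ∂μ) hf (hg.div hf) hC]
  refine setLIntegral_congr_fun hC (fun y _ => ?_)
  have hle : (∫⁻ x in B, p x y ∂μ) ≤ ∫⁻ x, p x y ∂μ :=
    lintegral_mono' Measure.restrict_le_self le_rfl
  have hfin : (∫⁻ x, p x y ∂μ) ≠ ∞ :=
    (lt_of_le_of_lt (lintegral_mono fun x => hbd x y)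
      (by simp [lintegral_const] : (∫⁻ _ : X, (M : ℝ≥0∞) ∂μ) < ∞)).ne
  simp only [Pi.mul_apply]
  rcases eq_or_ne (∫⁻ x, p x y ∂μ) 0 with h0 | h0
  · simp [h0, le_antisymm (h0 ▸ hle) zero_le]
  · rw [ENNReal.mul_div_cancel h0 hfin]
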